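/- With [s]_{x,α} = 1 - α x^s, N_{s,t} = ([3]_{x,α}[s+2]_{x,α}[t+2]_{x,α}[s+t+3]_{x,α})/([2]_{x,α}[s+3]_{x,α}[t+3]_{x,α}[s+t+2]_{x,α}), and g D_{s,t} = α x (1-x)(1-x^s)(1-x^t)[s+t+3]_{x,α²}/([2]_{x,α}[s+1]_{x,α}[t+1]_{x,α}[s+t+2]_{x,α}), and with U_s, g as in the bivariate parametrization (U_s = U [s]_{x,1}[s+3]_{x,α}/([s+1]_{x,1}[s+2]_{x,α}), U = (1+x+αx-6αx²+αx³+α²x³+α²x⁴)/((1-αx)(1-αx³)), g = x(1-αx)³(1-αx³)/(1+x+αx-6αx²+αx³+α²x³+α²x⁴)²), the identity N_{s,t} = 1 + g² U_s U_t N_{s,t} · (D_{s+1,t+1}/(1 - g D_{s+1,t+1})) holds as an identity of rational functions in x and α, for all natural numbers s, t. -/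

import Mathlib

noncomputable section

/-- The field of rational functions ℚ(x,α) in two variables. -/
abbrev K := FractionRing (MvPolynomial (Fin 2) ℚ)

/-- The formal variable x. -/
def x : K := algebraMap (MvPolynomial (Fin 2) ℚ) K (MvPolynomial.X 0)

/-- The formal variable α. -/
def a : K := algebraMap (MvPolynomial (Fin 2) ℚ) K (MvPolynomial.X 1)

/-- [s]_{x,α} = 1 - α x^s. -/
def brA (s : ℕ) : K := 1 - a * x ^ s

/-- [s]_{x,α²} = 1 - α² x^s. -/
def brA2 (s : ℕ) : K := 1 - a ^ 2 * x ^ s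

/-- [s]_{x,1} = 1 - x^s. -/
def br1 (s : ℕ) : K := 1 - x ^ s

/-- The recurring polynomial 1+x+αx-6αx²+αx³+α²x³+α²x⁴. -/
def P : K := 1 + x + a * x - 6 * a * x ^ 2 + a * x ^ 3 + a ^ 2 * x ^ 3 + a ^ 2 * x ^ 4

/-- T (bivariate). -/
def T : K := a * (1 - x) ^ 2 * P / ((1 - a * x) ^ 3 * (1 - a * x ^ 3))

/-- U (bivariate). -/
def U : K := P / ((1 - a * x) * (1 - a * x ^ 3))

/-- g (bivariate). -/
def g : K := x * (1 - a * x) ^ 3 * (1 - a * x ^ 3) / P ^ 2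

/-- z (bivariate). -/
def z : K := a * (1 - x) ^ 3 * (1 - a ^ 2 * x ^ 3) / ((1 - a * x) ^ 3 * (1 - a * x ^ 3))

/-- T_s (bivariate). -/
def Ts (s : ℕ) : K := T * br1 s * brA2 (s + 3) / (brA (s + 1) * brA (s + 2))

/-- U_s (bivariate). -/
def Us (s : ℕ) : K := U * br1 s * brA (s + 3) / (br1 (s + 1) * brA (s + 2))

/-- W_s = U_s / (1 + g U_s T_{s+1}). -/
def W (s : ℕ) : K := Us s / (1 + g * Us s * Ts (s + 1))

/-- N_{s,t} (bivariate). -/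
def N (s t : ℕ) : K :=
  brA 3 * brA (s + 2) * brA (t + 2) * brA (s + t + 3) /
    (brA 2 * brA (s + 3) * brA (t + 3) * brA (s + t + 2))

/-- g·D_{s,t}, via its closed form. -/
def gD (s t : ℕ) : K :=
  a * x * (1 - x) * (1 - x ^ s) * (1 - x ^ t) * brA2 (s + t + 3) /
    (brA 2 * brA (s + 1) * brA (t + 1) * brA (s + t + 2))

/-- D_{s,t} recovered from g·D_{s,t}. -/
def D (s t : ℕ) : K := gD s t / g

lemma nz {p : MvPolynomial (Fin 2) ℚ}
    (h : MvPolynomial.eval (0 : Fin 2 → ℚ) p ≠ 0) :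
    algebraMap (MvPolynomial (Fin 2) ℚ) K p ≠ 0 := by
  intro hc
  apply h
  have : p = 0 := IsFractionRing.injective (MvPolynomial (Fin 2) ℚ) K (by simpa using hc)
  simp [this]


lemma x_ne : x ≠ 0 := by
  intro h
  exact MvPolynomial.X_ne_zero 0 (IsFractionRing.injective (MvPolynomial (Fin 2) ℚ) K (by simpa [x] using h))


lemma brA_ne (s : ℕ) : brA s ≠ 0 := by
  have h : brA s =
      algebraMap (MvPolynomial (Fin 2) ℚ) K (1 - MvPolynomial.X 1 * MvPolynomial.X 0 ^ s) := by
    simp [brA, a, x, map_sub, map_mul, map_pow]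
  rw [h]; exact nz (by simp)


lemma brA2_ne (s : ℕ) : brA2 s ≠ 0 := by
  have h : brA2 s =
      algebraMap (MvPolynomial (Fin 2) ℚ) K (1 - MvPolynomial.X 1 ^ 2 * MvPolynomial.X 0 ^ s) := by
    simp [brA2, a, x, map_sub, map_mul, map_pow]
  rw [h]; exact nz (by simp)


lemma br1_ne (s : ℕ) : br1 (s + 1) ≠ 0 := by
  have h : br1 (s + 1) =
      algebraMap (MvPolynomial (Fin 2) ℚ) K (1 - MvPolynomial.X 0 ^ (s + 1)) := by
    simp [br1, x, map_sub, map_pow]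
  rw [h]; exact nz (by simp)


lemma one_sub_x_ne : (1 : K) - x ≠ 0 := by
  have := br1_ne 0
  simpa [br1] using this


lemma P_ne : P ≠ 0 := by
  have h : P = algebraMap (MvPolynomial (Fin 2) ℚ) K
      (1 + MvPolynomial.X 0 + MvPolynomial.X 1 * MvPolynomial.X 0
        - 6 * MvPolynomial.X 1 * MvPolynomial.X 0 ^ 2
        + MvPolynomial.X 1 * MvPolynomial.X 0 ^ 3
        + MvPolynomial.X 1 ^ 2 * MvPolynomial.X 0 ^ 3
        + MvPolynomial.X 1 ^ 2 * MvPolynomial.X 0 ^ 4) := by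
    simp [P, a, x, map_add, map_sub, map_mul, map_pow, map_one, map_ofNat]
  rw [h]; exact nz (by simp)


lemma delta_ne (s t : ℕ) :
    brA 2 * brA (s + 2) * brA (t + 2) * brA (s + t + 4)
      - a * x * (1 - x) * (1 - x ^ (s + 1)) * (1 - x ^ (t + 1)) * brA2 (s + t + 5) ≠ 0 := by
  have h : brA 2 * brA (s + 2) * brA (t + 2) * brA (s + t + 4)
      - a * x * (1 - x) * (1 - x ^ (s + 1)) * (1 - x ^ (t + 1)) * brA2 (s + t + 5) =
      algebraMap (MvPolynomial (Fin 2) ℚ) K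
      ((1 - MvPolynomial.X 1 * MvPolynomial.X 0 ^ 2)
        * (1 - MvPolynomial.X 1 * MvPolynomial.X 0 ^ (s + 2))
        * (1 - MvPolynomial.X 1 * MvPolynomial.X 0 ^ (t + 2))
        * (1 - MvPolynomial.X 1 * MvPolynomial.X 0 ^ (s + t + 4))
        - MvPolynomial.X 1 * MvPolynomial.X 0 * (1 - MvPolynomial.X 0)
          * (1 - MvPolynomial.X 0 ^ (s + 1)) * (1 - MvPolynomial.X 0 ^ (t + 1))
          * (1 - MvPolynomial.X 1 ^ 2 * MvPolynomial.X 0 ^ (s + t + 5))) := by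
    simp [brA, brA2, a, x, map_sub, map_mul, map_pow, map_one]
  rw [h]; exact nz (by simp)


lemma g_ne : g ≠ 0 := by
  have h1 : (1:K) - a * x ≠ 0 := by simpa [brA] using brA_ne 1
  have h3 : (1:K) - a * x ^ 3 ≠ 0 := by simpa [brA] using brA_ne 3
  exact div_ne_zero (mul_ne_zero (mul_ne_zero x_ne (pow_ne_zero 3 h1)) h3)
    (pow_ne_zero 2 P_ne)





set_option maxHeartbeats 1600000 in
lemma hq_lemma : g * (U * U) = x * (1 - a * x) / (1 - a * x ^ 3) := by
  have hA1 : (1:K) - a * x ≠ 0 := by simpa [brA] using brA_ne 1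
  have hA3 : (1:K) - a * x ^ 3 ≠ 0 := by simpa [brA] using brA_ne 3
  rw [g, U]
  field_simp [P_ne, hA1, hA3]


set_option maxHeartbeats 4000000 in
lemma h8_lemma (s t : ℕ) (hA3 : (1:K) - a * x ^ 3 ≠ 0)
    (eS2 : (1:K) - a * x ^ (s + 2) ≠ 0) (eT2 : (1:K) - a * x ^ (t + 2) ≠ 0)
    (fS : (1:K) - x ^ (s + 1) ≠ 0) (fT : (1:K) - x ^ (t + 1) ≠ 0) :
    g ^ 2 * Us s * Us t * N s t * ((a * x * (1 - x) * (1 - x ^ (s + 1)) * (1 - x ^ (t + 1)) * (1 - a ^ 2 * x ^ (s + t + 5))) / (g * ((1 - a * x ^ 2) * (1 - a * x ^ (s + 2)) * (1 - a * x ^ (t + 2)) * (1 - a * x ^ (s + t + 4)) - a * x * (1 - x) * (1 - x ^ (s + 1)) * (1 - x ^ (t + 1)) * (1 - a ^ 2 * x ^ (s + t + 5))))) = (x * (1 - a * x) * (1 - x ^ s) * (1 - a * x ^ (s + 3)) * (1 - x ^ t) * (1 - a * x ^ (t + 3)) * (1 - a * x ^ (s + t + 3)) * (a * x * (1 - x)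 * (1 - a ^ 2 * x ^ (s + t + 5)))) / (((1 - a * x ^ 2) * (1 - a * x ^ (s + 3)) * (1 - a * x ^ (t + 3)) * (1 - a * x ^ (s + t + 2))) * ((1 - a * x ^ 2) * (1 - a * x ^ (s + 2)) * (1 - a * x ^ (t + 2)) * (1 - a * x ^ (s + t + 4)) - a * x * (1 - x) * (1 - x ^ (s + 1)) * (1 - x ^ (t + 1)) * (1 - a ^ 2 * x ^ (s + t + 5)))) := by
  rw [Us, Us, N]
  simp only [brA, brA2, br1]
  set b1 : K := 1 - a * x with hb1
  set b2 : K := 1 - a * x ^ 2 with hb2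
  set b3 : K := 1 - a * x ^ 3 with hb3
  set bS2 : K := 1 - a * x ^ (s + 2) with hbS2
  set bS3 : K := 1 - a * x ^ (s + 3) with hbS3
  set bT2 : K := 1 - a * x ^ (t + 2) with hbT2
  set bT3 : K := 1 - a * x ^ (t + 3) with hbT3
  set bST2 : K := 1 - a * x ^ (s + t + 2) with hbST2
  set bST3 : K := 1 - a * x ^ (s + t + 3) with hbST3
  set bST4 : K := 1 - a * x ^ (s + t + 4) with hbST4
  set cS : K := 1 - x ^ s with hcS
  set cT : K := 1 - x ^ t with hcT
  set cS1 : K := 1 - x ^ (s + 1) with hcS1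
  set cT1 : K := 1 - x ^ (t + 1) with hcT1
  set w : K := 1 - x with hw
  set v : K := 1 - a ^ 2 * x ^ (s + t + 5) with hv
  set Del : K := b2 * bS2 * bT2 * bST4 - a * x * w * cS1 * cT1 * v with hDl
  set Ndl : K := b2 * bS3 * bT3 * bST2 with hNdl
  clear_value b1 b2 b3 bS2 bS3 bT2 bT3 bST2 bST3 bST4 cS cT cS1 cT1 w v Del Ndl
  have hC : b3 * cS1 * bS2 * cT1 * bT2 ≠ 0 :=
    mul_ne_zero (mul_ne_zero (mul_ne_zero (mul_ne_zero hA3 fS) eS2) fT) eT2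
  calc g ^ 2 * (U * cS * bS3 / (cS1 * bS2)) * (U * cT * bT3 / (cT1 * bT2)) *
        (b3 * bS2 * bT2 * bST3 / Ndl) * (a * x * w * cS1 * cT1 * v / (g * Del))
      = g * (U * U) * (g * g⁻¹) *
          ((cS * bS3 * (cT * bT3) * (b3 * bS2 * bT2 * bST3) * (a * x * w * cS1 * cT1 * v)) /
            (cS1 * bS2 * (cT1 * bT2) * Ndl * Del)) := by
        ring
    _ = g * (U * U) * 1 *
          ((cS * bS3 * (cT * bT3) * (b3 * bS2 * bT2 * bST3) * (a * x * w * cS1 * cT1 * v)) /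
            (cS1 * bS2 * (cT1 * bT2) * Ndl * Del)) := by
        rw [mul_inv_cancel₀ g_ne]
    _ = (b3 * cS1 * bS2 * cT1 * bT2) *
          (x * b1 * cS * bS3 * cT * bT3 * bST3 * (a * x * w * v)) /
          ((b3 * cS1 * bS2 * cT1 * bT2) * (Ndl * Del)) := by
        rw [show g * (U * U) = x * b1 / b3 by rw [hb1, hb3]; exact hq_lemma]
        ring
    _ = (x * b1 * cS * bS3 * cT * bT3 * bST3 * (a * x * w * v)) / (Ndl * Del) := by
        rw [mul_div_mul_left _ _ hC]


set_option maxHeartbeats 1600000 in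
lemma key_lemma (s t : ℕ) :
    (((1 - a * x ^ 3) * (1 - a * x ^ (s + 2)) * (1 - a * x ^ (t + 2)) * (1 - a * x ^ (s + t + 3))) - ((1 - a * x ^ 2) * (1 - a * x ^ (s + 3)) * (1 - a * x ^ (t + 3)) * (1 - a * x ^ (s + t + 2)))) * ((1 - a * x ^ 2) * (1 - a * x ^ (s + 2)) * (1 - a * x ^ (t + 2)) * (1 - a * x ^ (s + t + 4)) - a * x * (1 - x) * (1 - x ^ (s + 1)) * (1 - x ^ (t + 1)) * (1 - a ^ 2 * x ^ (s + t + 5))) = (x * (1 - a * x) * (1 - x ^ s) * (1 - a * x ^ (s + 3)) * (1 - x ^ t) * (1 - a * x ^ (t + 3)) * (1 - a * x ^ (s + t + 3)) * (a * x * (1 - x) * (1 - a ^ 2 * x ^ (s + t + 5)))) := by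
  ring


set_option maxHeartbeats 1600000 in
theorem N_bivariate_recursion (s t : ℕ) :
    N s t = 1 + g ^ 2 * Us s * Us t * N s t *
      (D (s + 1) (t + 1) / (1 - g * D (s + 1) (t + 1))) := by
  have hA2 : (1:K) - a * x ^ 2 ≠ 0 := by simpa [brA] using brA_ne 2
  have hA3 : (1:K) - a * x ^ 3 ≠ 0 := by simpa [brA] using brA_ne 3
  have eS2 : (1:K) - a * x ^ (s + 2) ≠ 0 := by simpa [brA] using brA_ne (s + 2)
  have eS3 : (1:K) - a * x ^ (s + 3) ≠ 0 := by simpa [brA] using brA_ne (s + 3)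
  have eT2 : (1:K) - a * x ^ (t + 2) ≠ 0 := by simpa [brA] using brA_ne (t + 2)
  have eT3 : (1:K) - a * x ^ (t + 3) ≠ 0 := by simpa [brA] using brA_ne (t + 3)
  have eST2 : (1:K) - a * x ^ (s + t + 2) ≠ 0 := by simpa [brA] using brA_ne (s + t + 2)
  have eST4 : (1:K) - a * x ^ (s + t + 4) ≠ 0 := by simpa [brA] using brA_ne (s + t + 4)
  have fS : (1:K) - x ^ (s + 1) ≠ 0 := by simpa [br1] using br1_ne s
  have fT : (1:K) - x ^ (t + 1) ≠ 0 := by simpa [br1] using br1_ne t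
  have hDel : ((1 - a * x ^ 2) * (1 - a * x ^ (s + 2)) * (1 - a * x ^ (t + 2)) * (1 - a * x ^ (s + t + 4)) - a * x * (1 - x) * (1 - x ^ (s + 1)) * (1 - x ^ (t + 1)) * (1 - a ^ 2 * x ^ (s + t + 5))) ≠ 0 := by
    have := delta_ne s t
    simpa [brA, brA2] using this
  have hNd : ((1 - a * x ^ 2) * (1 - a * x ^ (s + 3)) * (1 - a * x ^ (t + 3)) * (1 - a * x ^ (s + t + 2))) ≠ 0 := mul_ne_zero (mul_ne_zero (mul_ne_zero hA2 eS3) eT3) eST2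
  have h1 : D (s + 1) (t + 1) / (1 - g * D (s + 1) (t + 1)) = (a * x * (1 - x) * (1 - x ^ (s + 1)) * (1 - x ^ (t + 1)) * (1 - a ^ 2 * x ^ (s + t + 5))) / (g * ((1 - a * x ^ 2) * (1 - a * x ^ (s + 2)) * (1 - a * x ^ (t + 2)) * (1 - a * x ^ (s + t + 4)) - a * x * (1 - x) * (1 - x ^ (s + 1)) * (1 - x ^ (t + 1)) * (1 - a ^ 2 * x ^ (s + t + 5)))) := by
    have hgDeq : gD (s + 1) (t + 1) =
        (a * x * (1 - x) * (1 - x ^ (s + 1)) * (1 - x ^ (t + 1)) * (1 - a ^ 2 * x ^ (s + t + 5))) / ((1 - a * x ^ 2) * (1 - a * x ^ (s + 2)) * (1 - a * x ^ (t + 2)) * (1 - a * x ^ (s + t + 4))) := by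
      rw [gD]
      simp only [brA, brA2]
      ring_nf
    have hB : ((1:K) - a * x ^ 2) * (1 - a * x ^ (s + 2)) * (1 - a * x ^ (t + 2)) * (1 - a * x ^ (s + t + 4)) ≠ 0 :=
      mul_ne_zero (mul_ne_zero (mul_ne_zero hA2 eS2) eT2) eST4
    rw [D, hgDeq, mul_div_cancel₀ _ g_ne]
    rw [div_div, one_sub_div hB, ← mul_div_assoc, div_div_div_cancel_right₀]
    exact hB
  rw [h1, h8_lemma s t hA3 eS2 eT2 fS fT, N]
  simp only [brA]
  rw [← key_lemma s t, mul_div_mul_right _ _ hDel, sub_div, div_self hNd]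
  ring
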